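/- Suppose c ∈ B satisfies c^N = 0 and the master equation ∂(c) = (1/2)·{c, c}, and set exp(c) := Σ_{n=0}^{N−1} c^n/n!. Then for every x ∈ B, ∂( exp(c)·x ) = exp(c)·∂(x) − exp(c)·{c, x}; that is, conjugation by the multiplicative cocycle exp(c) twists ∂ by subtracting the hamiltonian vector field {c, ·}. -/
import Mathlib


/-- If `c^N = 0` and `∂(c) = (1/2)·{c,c}`, then with `exp(c) = Σ_{n<N} c^n/n!` one has
`∂(exp(c)·x) = exp(c)·∂(x) − exp(c)·{c,x}` for every `x`. -/
theorem exp_cocycle_twists_partial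
    (B : Type*) [CommRing B] [Algebra ℚ B]
    (p : B →ₗ[ℚ] B) (br : B →ₗ[ℚ] B →ₗ[ℚ] B)
    (hp : ∀ x y : B, p (x * y) = p x * y + x * p y - br x y)
    (hbr : ∀ x y z : B, br x (y * z) = br x y * z + y * br x z)
    (c : B) (N : ℕ) (hc : c ^ N = 0)
    (hmaster : p c = (1 / 2 : ℚ) • br c c) :
    ∀ x : B,
      p ((∑ n ∈ Finset.range N, ((n.factorial : ℚ))⁻¹ • c ^ n) * x)
        = (∑ n ∈ Finset.range N, ((n.factorial : ℚ))⁻¹ • c ^ n) * p x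
          - (∑ n ∈ Finset.range N, ((n.factorial : ℚ))⁻¹ • c ^ n) * br c x := by
  intro x
  -- basic consequences of the axioms
  have hsymm : ∀ a b : B, br a b = br b a := by
    intro a b
    have h1 := hp a b
    have h2 := hp b a
    rw [mul_comm b a] at h2
    linear_combination h1 - h2
  have hbr1 : ∀ a : B, br a 1 = 0 := by
    intro a
    have := hbr a 1 1
    simpa using this
  have hp1 : p (1 : B) = 0 := by
    have := hp 1 1
    simpa [hbr1] using this
  -- cancellation of nonzero rational scalars
  have hcancel : ∀ (q : ℚ) (z : B), q ≠ 0 → algebraMap ℚ B q * z = 0 → z = 0 := by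
    intro q z hq h
    have := congrArg (fun w => algebraMap ℚ B q⁻¹ * w) h
    simpa [← mul_assoc, ← map_mul, inv_mul_cancel₀ hq] using this
  have hcast : ∀ q : ℚ, ∀ z : B, q • z = algebraMap ℚ B q * z := fun q z => Algebra.smul_def q z
  -- the master equation, denominator-free
  have h12 : (algebraMap ℚ B (1/2)) * 2 = 1 := by
    rw [show (2:B) = algebraMap ℚ B 2 from (map_ofNat _ 2).symm, ← map_mul]
    norm_num
  have hm : (2:B) * p c = br c c := by
    rw [hmaster, Algebra.smul_def]
    linear_combination (br c c) * h12
  -- bracket with powers of c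
  have hbrpow : ∀ (n : ℕ) (a : B), br a (c ^ (n+1)) = ((n:B)+1) * (c ^ n * br a c) := by
    intro n
    induction n with
    | zero => intro a; simp
    | succ k ih =>
      intro a
      rw [pow_succ, hbr, ih]
      push_cast
      ring
  -- the degenerate cases N = 0, N = 1
  obtain _ | N := N
  · simp
  obtain _ | m := N
  · rw [pow_one] at hc
    simp [hc]
  -- now the exponent bound is m + 2
  have hC : ∀ a : B, c ^ (m+1) * br c a = 0 := by
    intro a
    have h := hbrpow (m+1) a
    rw [show (m+1)+1 = m+2 from rfl, hc, map_zero] at h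
    have hcast2 : algebraMap ℚ B ((m:ℚ)+2) = ((m:B)+2) := by
      rw [map_add, map_natCast, map_ofNat]
    have h2 : c ^ (m+1) * br a c = 0 := by
      apply hcancel ((m:ℚ)+2) _ (by positivity)
      rw [hcast2]
      push_cast at h
      linear_combination -h
    rw [hsymm c a]
    exact h2
  -- derivative of powers of c
  have hpc : ∀ n : ℕ, 2 * p (c ^ (n+2)) =
      ((n:B)+2) * (c ^ (n+1) * br c c) - (((n:B)+2)*((n:B)+1)) * (c ^ n * br c c) := by
    intro n
    induction n with
    | zero =>
      have h := hp c c
      rw [show c ^ (0+2) = c * c by ring]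
      push_cast
      linear_combination 2*h + 2*c*hm
    | succ k ih =>
      have h := hp (c ^ (k+2)) c
      rw [hsymm (c ^ (k+2)) c, hbrpow (k+1) c] at h
      rw [show c ^ (k+1+2) = c ^ (k+2) * c by ring]
      push_cast
      push_cast at h ih
      linear_combination 2*h + c*ih + c^(k+2)*hm
  -- the exponential partial sums
  set f : ℕ → B := fun n => algebraMap ℚ B ((n.factorial : ℚ))⁻¹ with hf
  set E : ℕ → B := fun k => ∑ n ∈ Finset.range k, f n * c ^ n with hE
  have hgoalE : (∑ n ∈ Finset.range (m+1+1), ((n.factorial : ℚ))⁻¹ • c ^ n) = E (m+2) := by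
    simp only [hE, hf]
    exact Finset.sum_congr rfl fun n _ => hcast _ _
  have hf0 : f 0 = 1 := by simp [hf]
  have hf1 : f 1 = 1 := by simp [hf]
  have hfs : ∀ n : ℕ, ((n:B)+1) * f (n+1) = f n := by
    intro n
    have hcst : ((n:B)+1) = algebraMap ℚ B ((n:ℚ)+1) := by
      rw [map_add, map_natCast, map_one]
    simp only [hf, hcst, ← map_mul]
    congr 1
    rw [Nat.factorial_succ]
    have h1 : ((n.factorial : ℚ)) ≠ 0 := Nat.cast_ne_zero.mpr n.factorial_ne_zero
    have h2 : ((n:ℚ)+1) ≠ 0 := by positivity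
    push_cast
    field_simp
  have hpf : ∀ (n : ℕ) (z : B), p (f n * z) = f n * p z := by
    intro n z
    simp only [hf, ← Algebra.smul_def, map_smul]
  have hbrf : ∀ (n : ℕ) (z a : B), br (f n * z) a = f n * br z a := by
    intro n z a
    simp only [hf, ← Algebra.smul_def, map_smul, LinearMap.smul_apply]
  have hEsucc : ∀ k : ℕ, E (k+1) = E k + f k * c ^ k := by
    intro k
    simp only [hE]
    exact Finset.sum_range_succ _ _
  -- derivative of the exponential partial sums
  have hpE : ∀ k : ℕ, 2 * p (E (k+2)) = f k * (c ^ k * br c c) := by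
    intro k
    induction k with
    | zero =>
      have h2 : E 2 = 1 + c := by
        rw [hEsucc 1, hEsucc 0, hf0, hf1]
        simp [hE]
      rw [h2, map_add, hp1, hf0]
      linear_combination hm
    | succ k ih =>
      rw [show k+1+2 = (k+2)+1 from rfl, hEsucc (k+2), map_add, hpf]
      push_cast at ih ⊢
      linear_combination (norm := (push_cast; ring1)) ih + f (k+2) * hpc k +
        (c^(k+1)*(br c c) - ((k:B)+1)*(c^k*(br c c))) * hfs (k+1) - (c^k*(br c c)) * hfs k
  -- bracket of the exponential with x
  have hbrE : ∀ k : ℕ, br (E (k+1)) x = E k * br c x := by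
    intro k
    induction k with
    | zero =>
      have h1 : E 1 = 1 := by rw [hEsucc 0, hf0]; simp [hE]
      have h0 : E 0 = 0 := by simp [hE]
      rw [h1, h0, hsymm, hbr1]
      ring
    | succ k ih =>
      have hb : br (c ^ (k+1)) x = ((k:B)+1) * (c ^ k * br c x) := by
        rw [hsymm, hbrpow, hsymm x c]
      rw [hEsucc (k+1), map_add, LinearMap.add_apply, hbrf, ih, hb, hEsucc k]
      linear_combination (norm := (push_cast; ring1)) (c^k * br c x) * hfs k
  -- p (E (m+2)) = 0
  have hcmu : c ^ m * br c c = 0 := by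
    have h := hpc m
    rw [hc, map_zero] at h
    apply hcancel (((m:ℚ)+2)*((m:ℚ)+1)) _ (by positivity)
    have hcast3 : algebraMap ℚ B (((m:ℚ)+2)*((m:ℚ)+1)) = ((m:B)+2)*((m:B)+1) := by
      rw [map_mul]
      simp [map_ofNat]
    rw [hcast3]
    linear_combination h + ((m:B)+2) * (hC c)
  have hpE0 : p (E (m+2)) = 0 := by
    have h := hpE m
    rw [hcmu, mul_zero] at h
    calc p (E (m+2)) = algebraMap ℚ B (1/2) * (2 * p (E (m+2))) := by
          rw [← mul_assoc, h12, one_mul]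
      _ = 0 := by rw [h, mul_zero]
  have hEbr : br (E (m+2)) x = E (m+2) * br c x := by
    rw [hbrE (m+1), hEsucc (m+1)]
    linear_combination (-(f (m+1))) * hC x
  -- final assembly
  rw [hgoalE]
  have h := hp (E (m+2)) x
  linear_combination h + x * hpE0 - hEbr
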